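/- For 0 ≤ ρ₂ < ρ₁, σ > 0 and n ≥ 1, the function y ↦ (σ²/(ρ₁² − ρ₂²))(F_{χ²_n(ρ₂²/σ²)}(y) − F_{χ²_n(ρ₁²/σ²)}(y)), defined for y > 0, is a probability density function: it is nonnegative and integrates to 1 over (0, ∞). -/

import Mathlib

/-- Central chi-square density with `k` degrees of freedom. -/
noncomputable def chiSqPdf (k : ℕ) (y : ℝ) : ℝ :=
  y ^ ((k : ℝ) / 2 - 1) * Real.exp (-y / 2) / (2 ^ ((k : ℝ) / 2) * Real.Gamma ((k : ℝ) / 2))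

/-- Noncentral chi-square density (Poisson-weighted mixture of central chi-square densities). -/
noncomputable def ncChiSqPdf (n : ℕ) (lam y : ℝ) : ℝ :=
  ∑' i : ℕ, Real.exp (-lam / 2) * (lam / 2) ^ i / i.factorial * chiSqPdf (n + 2 * i) y

/-- Noncentral chi-square CDF. -/
noncomputable def ncChiSqCdf (n : ℕ) (lam y : ℝ) : ℝ :=
  ∫ t in Set.Ioc (0 : ℝ) y, ncChiSqPdf n lam t

open MeasureTheory Real Set
open scoped ENNReal NNReal

namespace NCProof

noncomputable def pois (lam : ℝ) (i : ℕ) : ℝ :=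
  Real.exp (-lam / 2) * (lam / 2) ^ i / i.factorial

noncomputable def Q (k : ℕ) (y : ℝ) : ℝ := ∫ t in Set.Ioc (0 : ℝ) y, chiSqPdf k t

lemma half_pos' {k : ℕ} (hk : 1 ≤ k) : 0 < (k : ℝ) / 2 := by
  have : (1:ℝ) ≤ (k:ℝ) := by exact_mod_cast hk
  linarith

lemma measurable_chiSqPdf (k : ℕ) : Measurable (chiSqPdf k) := by
  unfold chiSqPdf
  exact ((measurable_id.pow_const _).mul ((measurable_neg.div_const 2).exp)).div_const _

lemma chiSqPdf_nonneg (k : ℕ) {y : ℝ} (hy : 0 ≤ y) : 0 ≤ chiSqPdf k y := by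
  unfold chiSqPdf
  apply div_nonneg (mul_nonneg (Real.rpow_nonneg hy _) (Real.exp_nonneg _))
  have : (0:ℝ) ≤ (k:ℝ)/2 := by positivity
  positivity

lemma integrableOn_chiSqPdf {k : ℕ} (hk : 1 ≤ k) : IntegrableOn (chiSqPdf k) (Ioi 0) := by
  have ha := half_pos' hk
  have h := (integrableOn_rpow_mul_exp_neg_mul_rpow (s := (k:ℝ)/2 - 1) (p := 1) (b := 1/2)
    (by linarith) one_pos (by norm_num)).div_const (2 ^ ((k:ℝ)/2) * Real.Gamma ((k:ℝ)/2))
  refine IntegrableOn.congr_fun h (fun x hx => ?_) measurableSet_Ioi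
  unfold chiSqPdf
  rw [Real.rpow_one]
  ring_nf

lemma integral_chiSqPdf {k : ℕ} (hk : 1 ≤ k) : ∫ t in Ioi (0:ℝ), chiSqPdf k t = 1 := by
  have ha := half_pos' hk
  have key := integral_rpow_mul_exp_neg_mul_Ioi (a := (k:ℝ)/2) (r := (1:ℝ)/2) ha (by norm_num)
  have hcongr : ∀ t ∈ Ioi (0:ℝ), chiSqPdf k t
      = t ^ ((k:ℝ)/2 - 1) * Real.exp (-(1/2 * t)) / (2 ^ ((k:ℝ)/2) * Real.Gamma ((k:ℝ)/2)) := by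
    intro t _
    unfold chiSqPdf
    ring_nf
  rw [setIntegral_congr_fun measurableSet_Ioi hcongr, integral_div, key]
  have h2 : ((1:ℝ)/(1/2)) = 2 := by norm_num
  rw [h2]
  have hΓ : 0 < Real.Gamma ((k:ℝ)/2) := Real.Gamma_pos_of_pos ha
  have h2a : (0:ℝ) < 2 ^ ((k:ℝ)/2) := Real.rpow_pos_of_pos (by norm_num) _
  field_simp

lemma integrableOn_id_mul_chiSqPdf {k : ℕ} (hk : 1 ≤ k) :
    IntegrableOn (fun t => t * chiSqPdf k t) (Ioi 0) := by
  have ha := half_pos' hk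
  have h := (integrableOn_rpow_mul_exp_neg_mul_rpow (s := (k:ℝ)/2) (p := 1) (b := 1/2)
    (by linarith) one_pos (by norm_num)).div_const (2 ^ ((k:ℝ)/2) * Real.Gamma ((k:ℝ)/2))
  refine IntegrableOn.congr_fun h (fun x hx => ?_) measurableSet_Ioi
  have hx0 : (0:ℝ) < x := hx
  unfold chiSqPdf
  rw [Real.rpow_one, show ((k:ℝ)/2) = ((k:ℝ)/2 - 1) + 1 by ring,
    Real.rpow_add_one hx0.ne']
  ring_nf

lemma integral_id_mul_chiSqPdf {k : ℕ} (hk : 1 ≤ k) :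
    ∫ t in Ioi (0:ℝ), t * chiSqPdf k t = k := by
  have ha := half_pos' hk
  have key := integral_rpow_mul_exp_neg_mul_Ioi (a := (k:ℝ)/2 + 1) (r := (1:ℝ)/2)
    (by linarith) (by norm_num)
  have hcongr : ∀ t ∈ Ioi (0:ℝ), t * chiSqPdf k t
      = t ^ ((k:ℝ)/2 + 1 - 1) * Real.exp (-(1/2 * t))
        / (2 ^ ((k:ℝ)/2) * Real.Gamma ((k:ℝ)/2)) := by
    intro t ht
    have ht0 : (0:ℝ) < t := ht
    unfold chiSqPdf
    rw [show ((k:ℝ)/2 + 1 - 1) = ((k:ℝ)/2 - 1) + 1 by ring, Real.rpow_add_one ht0.ne']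
    ring_nf
  rw [setIntegral_congr_fun measurableSet_Ioi hcongr, integral_div, key]
  have h2 : ((1:ℝ)/(1/2)) = 2 := by norm_num
  rw [h2, Real.Gamma_add_one ha.ne', Real.rpow_add (by norm_num : (0:ℝ) < 2), Real.rpow_one]
  have hΓ : 0 < Real.Gamma ((k:ℝ)/2) := Real.Gamma_pos_of_pos ha
  have h2a : (0:ℝ) < 2 ^ ((k:ℝ)/2) := Real.rpow_pos_of_pos (by norm_num) _
  field_simp

lemma Q_nonneg {k : ℕ} (hk : 1 ≤ k) (y : ℝ) : 0 ≤ Q k y := by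
  exact setIntegral_nonneg measurableSet_Ioc fun t ht => chiSqPdf_nonneg k ht.1.le

lemma Q_le_one {k : ℕ} (hk : 1 ≤ k) (y : ℝ) : Q k y ≤ 1 := by
  rw [← integral_chiSqPdf hk]
  apply setIntegral_mono_set (integrableOn_chiSqPdf hk)
  · exact (ae_restrict_iff' measurableSet_Ioi).2 (ae_of_all _ fun t ht => chiSqPdf_nonneg k (le_of_lt ht))
  · exact HasSubset.Subset.eventuallyLE Ioc_subset_Ioi_self

/-- Stochastic monotonicity in the degrees of freedom. -/
lemma Q_add_two_le {k : ℕ} (hk : 1 ≤ k) {y : ℝ} (hy : 0 < y) : Q (k + 2) y ≤ Q k y := by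
  have ha := half_pos' hk
  set a : ℝ := (k:ℝ)/2 with hadef
  have hca : ((k+2:ℕ):ℝ)/2 = a + 1 := by push_cast; ring
  have hΓ : 0 < Real.Gamma a := Real.Gamma_pos_of_pos ha
  have h2a : (0:ℝ) < 2 ^ a := Real.rpow_pos_of_pos (by norm_num) _
  have hΓ1 : 0 < Real.Gamma (a + 1) := Real.Gamma_pos_of_pos (by linarith)
  have h2a1 : (0:ℝ) < 2 ^ (a + 1) := Real.rpow_pos_of_pos (by norm_num) _
  have hfun : (fun s => 2 * chiSqPdf (k+2) s)
      = fun s : ℝ => 2 * (s ^ a * Real.exp (-s/2) / (2 ^ (a+1) * Real.Gamma (a+1))) := by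
    funext s; unfold chiSqPdf; rw [hca, add_sub_cancel_right]
  have hder : ∀ t ∈ Ioo (0:ℝ) y, HasDerivAt (fun s => 2 * chiSqPdf (k+2) s)
      (chiSqPdf k t - chiSqPdf (k+2) t) t := by
    intro t ht
    have ht0 : (0:ℝ) < t := ht.1
    have h1 : HasDerivAt (fun s : ℝ => s ^ a) (a * t ^ (a - 1)) t :=
      Real.hasDerivAt_rpow_const (Or.inl ht0.ne')
    have h2 : HasDerivAt (fun s : ℝ => Real.exp (-s/2)) (Real.exp (-t/2) * (-1/2)) t := by
      have := ((hasDerivAt_id t).neg.div_const 2).exp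
      simpa using this
    have h4 := ((h1.mul h2).div_const (2 ^ (a+1) * Real.Gamma (a+1))).const_mul 2
    rw [hfun]
    refine h4.congr_deriv (Eq.symm ?_)
    unfold chiSqPdf
    rw [hca, add_sub_cancel_right, ← hadef]
    have hta : t ^ a = t ^ (a - 1) * t := by
      rw [show a = (a-1)+1 by ring, Real.rpow_add_one ht0.ne']
      ring_nf
    rw [Real.Gamma_add_one ha.ne', Real.rpow_add (by norm_num : (0:ℝ) < 2) a 1, Real.rpow_one,
      hta]
    field_simp
    ring
  have hcont : ContinuousOn (fun s => 2 * chiSqPdf (k+2) s) (Icc 0 y) := by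
    rw [hfun]
    exact continuousOn_const.mul (((ContinuousOn.rpow_const continuousOn_id
      fun x _ => Or.inr ha.le).mul
      ((Real.continuous_exp.comp ((continuous_id.neg).div_const 2)).continuousOn)).div_const _)
  have hint : IntervalIntegrable (fun t => chiSqPdf k t - chiSqPdf (k+2) t) volume 0 y := by
    rw [intervalIntegrable_iff_integrableOn_Ioc_of_le hy.le]
    exact ((integrableOn_chiSqPdf hk).mono_set Ioc_subset_Ioi_self).sub
      ((integrableOn_chiSqPdf (by omega)).mono_set Ioc_subset_Ioi_self)
  have key := intervalIntegral.integral_eq_sub_of_hasDerivAt_of_le hy.le hcont hder hint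
  rw [intervalIntegral.integral_of_le hy.le] at key
  have h0 : chiSqPdf (k+2) 0 = 0 := by
    unfold chiSqPdf
    rw [hca, add_sub_cancel_right, Real.zero_rpow ha.ne']
    simp
  have hQ : Q k y - Q (k+2) y = 2 * chiSqPdf (k+2) y := by
    unfold Q
    rw [← integral_sub ((integrableOn_chiSqPdf hk).mono_set Ioc_subset_Ioi_self)
      ((integrableOn_chiSqPdf (k := k+2) (by omega)).mono_set Ioc_subset_Ioi_self), key, h0]
    ring
  have hnn := chiSqPdf_nonneg (k+2) hy.le
  linarith

/-! ### Poisson weights -/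

lemma pois_nonneg {lam : ℝ} (hl : 0 ≤ lam) (i : ℕ) : 0 ≤ pois lam i := by
  unfold pois
  have : (0:ℝ) ≤ lam / 2 := by linarith
  positivity

lemma pois_eq (lam : ℝ) : pois lam
    = fun i => Real.exp (-lam/2) * ((lam/2)^i / i.factorial) := by
  funext i; rw [pois, mul_div_assoc]

lemma summable_pois (lam : ℝ) : Summable (pois lam) := by
  rw [pois_eq]
  exact (Real.summable_pow_div_factorial _).mul_left _

lemma abs_pois_eq (lam : ℝ) (i : ℕ) :
    |pois lam i| = Real.exp (-lam/2) * (|lam|/2)^i / i.factorial := by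
  rw [pois, abs_div, abs_mul, abs_pow, Nat.abs_cast, abs_of_pos (Real.exp_pos _), abs_div,
    abs_two]

lemma summable_abs_pois (lam : ℝ) : Summable (fun i => |pois lam i|) := by
  have : (fun i => |pois lam i|)
      = fun i => Real.exp (-lam/2) * ((|lam|/2)^i / i.factorial) := by
    funext i; rw [abs_pois_eq, mul_div_assoc]
  rw [this]
  exact (Real.summable_pow_div_factorial _).mul_left _

lemma tsum_exp_div (x : ℝ) : ∑' i : ℕ, x ^ i / i.factorial = Real.exp x := by
  rw [Real.exp_eq_exp_ℝ, NormedSpace.exp_eq_tsum_div]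

lemma tsum_pois (lam : ℝ) : ∑' i, pois lam i = 1 := by
  rw [pois_eq, tsum_mul_left, tsum_exp_div, ← Real.exp_add]
  ring_nf
  exact Real.exp_zero

lemma pois_succ_mul (lam : ℝ) (i : ℕ) :
    pois lam (i+1) * ((i+1 : ℕ) : ℝ) = (lam/2) * pois lam i := by
  rw [pois, pois, Nat.factorial_succ, pow_succ]
  have h1 : ((i+1 : ℕ):ℝ) ≠ 0 := Nat.cast_ne_zero.2 (Nat.succ_ne_zero i)
  have h2 : (i.factorial : ℝ) ≠ 0 := Nat.cast_ne_zero.2 i.factorial_ne_zero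
  push_cast
  field_simp

lemma summable_pois_mul {lam : ℝ} (hl : 0 ≤ lam) : Summable (fun i => pois lam i * i) := by
  apply (summable_nat_add_iff 1).mp
  have h : (fun i : ℕ => pois lam (i+1) * ((i+1 : ℕ):ℝ)) = fun i => (lam/2) * pois lam i := by
    funext i; exact pois_succ_mul lam i
  rw [show (fun i : ℕ => pois lam (i+1) * ((i+1 : ℕ):ℝ))
    = fun i => (lam/2) * pois lam i from h]
  exact (summable_pois lam).mul_left _

lemma tsum_pois_mul {lam : ℝ} (hl : 0 ≤ lam) : ∑' i, pois lam i * i = lam / 2 := by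
  rw [Summable.tsum_eq_zero_add (summable_pois_mul hl), tsum_congr (fun b => pois_succ_mul lam b),
    tsum_mul_left, tsum_pois]
  simp

noncomputable def poisPrev (lam : ℝ) : ℕ → ℝ
  | 0 => 0
  | (i+1) => pois lam i

noncomputable def poisD (lam : ℝ) (i : ℕ) : ℝ := (1/2) * (poisPrev lam i - pois lam i)

lemma hasDerivAt_pois (i : ℕ) (l : ℝ) : HasDerivAt (fun x => pois x i) (poisD l i) l := by
  have h1 : HasDerivAt (fun x : ℝ => Real.exp (-x/2)) (Real.exp (-l/2) * (-1/2)) l := by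
    simpa using ((hasDerivAt_id l).neg.div_const 2).exp
  have h2 : HasDerivAt (fun x : ℝ => (x/2)^i) ((i:ℝ) * (l/2)^(i-1) * (1/2)) l := by
    simpa using ((hasDerivAt_id l).div_const 2).fun_pow i
  have h3 := (h1.mul h2).div_const (i.factorial : ℝ)
  have hfun : (fun x => pois x i) = fun x => (Real.exp (-x/2) * (x/2)^i) / (i.factorial:ℝ) := by
    funext x; rw [pois]
  rw [hfun]
  refine h3.congr_deriv (Eq.symm ?_)
  cases i with
  | zero => simp [poisD, poisPrev, pois]; ring
  | succ j =>
    simp only [poisD, poisPrev, pois, Nat.factorial_succ, pow_succ, Nat.succ_sub_one]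
    have h1' : ((j+1 : ℕ):ℝ) ≠ 0 := Nat.cast_ne_zero.2 (Nat.succ_ne_zero j)
    have h2' : (j.factorial : ℝ) ≠ 0 := Nat.cast_ne_zero.2 j.factorial_ne_zero
    push_cast
    field_simp
    ring

lemma abs_pois_le {Λ : ℝ} (hΛ : 0 ≤ Λ) {l : ℝ} (h1 : -1 < l) (h2 : l < Λ + 1) (i : ℕ) :
    |pois l i| ≤ Real.exp (1/2) * ((Λ+1)/2)^i / i.factorial := by
  rw [abs_pois_eq]
  have habs : |l| ≤ Λ + 1 := abs_le.2 ⟨by linarith, by linarith⟩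
  have he : Real.exp (-l/2) ≤ Real.exp (1/2) := Real.exp_le_exp.2 (by linarith)
  have hb : (|l|/2:ℝ)^i ≤ ((Λ+1)/2)^i := by
    apply pow_le_pow_left₀ (by positivity) (by linarith)
  have hm : Real.exp (-l/2) * (|l|/2)^i ≤ Real.exp (1/2) * ((Λ+1)/2)^i :=
    mul_le_mul he hb (by positivity) (Real.exp_pos _).le
  rw [div_eq_mul_inv, div_eq_mul_inv]
  exact mul_le_mul_of_nonneg_right hm (by positivity)

/-! ### CDF as a series -/

lemma integrable_pois_chiSqPdf {n : ℕ} (hn : 1 ≤ n) (lam : ℝ) (y : ℝ) (i : ℕ) :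
    Integrable (fun t => pois lam i * chiSqPdf (n+2*i) t) (volume.restrict (Ioc (0:ℝ) y)) :=
  ((integrableOn_chiSqPdf (le_add_right hn)).mono_set Ioc_subset_Ioi_self).const_mul _

lemma summable_norm_integral {n : ℕ} (hn : 1 ≤ n) (lam : ℝ) (y : ℝ) :
    Summable fun i => ∫ t in Ioc (0:ℝ) y, ‖pois lam i * chiSqPdf (n+2*i) t‖ := by
  apply Summable.of_nonneg_of_le (fun i => integral_nonneg fun t => norm_nonneg _)
    (fun i => ?_) (summable_abs_pois lam)
  have hcongr : ∀ t ∈ Ioc (0:ℝ) y, ‖pois lam i * chiSqPdf (n+2*i) t‖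
      = |pois lam i| * chiSqPdf (n+2*i) t := by
    intro t ht
    rw [norm_mul, Real.norm_eq_abs, Real.norm_eq_abs,
      abs_of_nonneg (chiSqPdf_nonneg _ ht.1.le)]
  rw [setIntegral_congr_fun measurableSet_Ioc hcongr, integral_const_mul]
  calc |pois lam i| * Q (n+2*i) y ≤ |pois lam i| * 1 :=
        mul_le_mul_of_nonneg_left (Q_le_one (le_add_right hn) y) (abs_nonneg _)
    _ = |pois lam i| := mul_one _

lemma cdf_eq_tsum {n : ℕ} (hn : 1 ≤ n) (lam : ℝ) {y : ℝ} (hy : 0 < y) :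
    ncChiSqCdf n lam y = ∑' i, pois lam i * Q (n + 2*i) y := by
  have h := integral_tsum_of_summable_integral_norm (integrable_pois_chiSqPdf hn lam y)
    (summable_norm_integral hn lam y)
  calc ncChiSqCdf n lam y = ∫ t in Ioc (0:ℝ) y, ∑' i, pois lam i * chiSqPdf (n + 2*i) t := rfl
    _ = ∑' i, ∫ t in Ioc (0:ℝ) y, pois lam i * chiSqPdf (n+2*i) t := h.symm
    _ = ∑' i, pois lam i * Q (n+2*i) y := by
        congr 1; funext i; rw [integral_const_mul]; rfl

lemma cdf_anti {n : ℕ} (hn : 1 ≤ n) {l1 l2 y : ℝ} (h2 : 0 ≤ l2) (h12 : l2 ≤ l1) (hy : 0 < y) :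
    ncChiSqCdf n l1 y ≤ ncChiSqCdf n l2 y := by
  have hl1 : 0 ≤ l1 := h2.trans h12
  set t : Set ℝ := Ioo (-1) (l1+1) with htdef
  have ht : IsOpen t := isOpen_Ioo
  have htc : IsPreconnected t := (convex_Ioo _ _).isPreconnected
  set C : ℝ := (l1+1)/2 with hCdef
  set B : ℕ → ℝ := fun i => Real.exp (1/2) * (C^i / i.factorial) with hBdef
  set Bm : ℕ → ℝ := fun i => if i = 0 then 0 else B (i-1) with hBmdef
  set u : ℕ → ℝ := fun i => (1/2) * (Bm i + B i) with hudef
  have hB : Summable B := (Real.summable_pow_div_factorial _).mul_left _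
  have hBm : Summable Bm := by
    apply (summable_nat_add_iff 1).mp
    have : (fun i : ℕ => Bm (i+1)) = B := by
      funext i; simp [hBmdef]
    rw [this]; exact hB
  have hu : Summable u := ((hBm.add hB).mul_left _)
  set g : ℕ → ℝ → ℝ := fun i x => pois x i * Q (n + 2*i) y with hgdef
  set g' : ℕ → ℝ → ℝ := fun i x => poisD x i * Q (n + 2*i) y with hg'def
  have hQ0 : ∀ i : ℕ, 0 ≤ Q (n + 2*i) y := fun i => Q_nonneg (le_add_right hn) y
  have hQ1 : ∀ i : ℕ, Q (n + 2*i) y ≤ 1 := fun i => Q_le_one (le_add_right hn) y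
  have hderiv : ∀ i x, x ∈ t → HasDerivAt (g i) (g' i x) x := by
    intro i x _
    exact (hasDerivAt_pois i x).mul_const _
  have hpois_le : ∀ i x, x ∈ t → |pois x i| ≤ B i := by
    intro i x hx
    have := abs_pois_le hl1 hx.1 hx.2 i
    rwa [mul_div_assoc] at this
  have hbound : ∀ i x, x ∈ t → ‖g' i x‖ ≤ u i := by
    intro i x hx
    have hQabs : |Q (n + 2*i) y| ≤ 1 := by
      rw [abs_of_nonneg (hQ0 i)]; exact hQ1 i
    have h1 : ‖g' i x‖ ≤ |poisD x i| := by
      rw [hg'def]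
      simp only [Real.norm_eq_abs, abs_mul]
      calc |poisD x i| * |Q (n + 2*i) y| ≤ |poisD x i| * 1 :=
            mul_le_mul_of_nonneg_left hQabs (abs_nonneg _)
        _ = |poisD x i| := mul_one _
    have h2 : |poisD x i| ≤ u i := by
      rw [poisD]
      have hprev : |poisPrev x i| ≤ Bm i := by
        cases i with
        | zero => simp [poisPrev, hBmdef]
        | succ j =>
          simp only [poisPrev, hBmdef, if_neg (Nat.succ_ne_zero j), Nat.succ_sub_one]
          exact hpois_le j x hx
      have hcur := hpois_le i x hx
      calc |(1/2) * (poisPrev x i - pois x i)| = (1/2) * |poisPrev x i - pois x i| := by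
            rw [abs_mul]; norm_num
        _ ≤ (1/2) * (|poisPrev x i| + |pois x i|) := by
            have := abs_sub (poisPrev x i) (pois x i)
            nlinarith [abs_sub_abs_le_abs_sub (poisPrev x i) (pois x i), abs_sub (poisPrev x i) (pois x i)]
        _ ≤ (1/2) * (Bm i + B i) := by nlinarith [abs_nonneg (pois x i), abs_nonneg (poisPrev x i)]
        _ = u i := rfl
    exact h1.trans h2
  have h0t : (0:ℝ) ∈ t := by constructor <;> [linarith; linarith]
  have hg0 : Summable fun i => g i 0 := by
    apply summable_of_ne_finset_zero (s := {0})
    intro i hi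
    have hi0 : i ≠ 0 := by simpa using hi
    simp only [hgdef, pois]
    rw [zero_div, zero_pow hi0]
    ring
  have hG : ∀ x ∈ t, HasDerivAt (fun z => ∑' i, g i z) (∑' i, g' i x) x :=
    fun x hx => hasDerivAt_tsum_of_isPreconnected hu ht htc hderiv hbound h0t hg0 hx
  have hsub : Icc l2 l1 ⊆ t := by
    intro x hx
    exact ⟨by linarith [hx.1], by linarith [hx.2]⟩
  have hanti : AntitoneOn (fun z => ∑' i, g i z) (Icc l2 l1) := by
    apply antitoneOn_of_deriv_nonpos (convex_Icc _ _)
    · intro x hx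
      exact (hG x (hsub hx)).continuousAt.continuousWithinAt
    · intro x hx
      rw [interior_Icc] at hx
      exact (hG x (hsub (Ioo_subset_Icc_self hx))).differentiableAt.differentiableWithinAt
    · intro x hx
      rw [interior_Icc] at hx
      have hxt : x ∈ t := hsub (Ioo_subset_Icc_self hx)
      rw [(hG x hxt).deriv]
      have hx0 : 0 ≤ x := le_trans h2 hx.1.le
      -- summabilities
      have hsB : Summable (fun i => pois x i * Q (n+2*i) y) := by
        apply Summable.of_nonneg_of_le
          (fun i => mul_nonneg (pois_nonneg hx0 i) (hQ0 i)) (fun i => ?_) (summable_pois x)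
        calc pois x i * Q (n+2*i) y ≤ pois x i * 1 :=
              mul_le_mul_of_nonneg_left (hQ1 i) (pois_nonneg hx0 i)
          _ = pois x i := mul_one _
      have hsA' : Summable (fun i => pois x i * Q (n+2*(i+1)) y) := by
        apply Summable.of_nonneg_of_le
          (fun i => mul_nonneg (pois_nonneg hx0 i) (Q_nonneg (le_add_right hn) y))
          (fun i => ?_) (summable_pois x)
        calc pois x i * Q (n+2*(i+1)) y ≤ pois x i * 1 :=
              mul_le_mul_of_nonneg_left (Q_le_one (le_add_right hn) y) (pois_nonneg hx0 i)
          _ = pois x i := mul_one _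
      have hsA : Summable (fun i => poisPrev x i * Q (n+2*i) y) := by
        apply (summable_nat_add_iff 1).mp
        exact hsA'
      have hgd : ∀ i, g' i x
          = (1/2) * (poisPrev x i * Q (n+2*i) y - pois x i * Q (n+2*i) y) := by
        intro i; simp only [hg'def, poisD]; ring
      rw [tsum_congr hgd, tsum_mul_left, Summable.tsum_sub hsA hsB]
      have hA : ∑' i, poisPrev x i * Q (n+2*i) y = ∑' i, pois x i * Q (n+2*(i+1)) y := by
        rw [Summable.tsum_eq_zero_add hsA]
        simp only [poisPrev]
        ring_nf
      have hstep : ∀ i : ℕ, Q (n+2*(i+1)) y ≤ Q (n+2*i) y := by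
        intro i
        have hk : n + 2*(i+1) = (n + 2*i) + 2 := by ring
        rw [hk]
        exact Q_add_two_le (le_add_right hn) hy
      have hle : ∑' i, pois x i * Q (n+2*(i+1)) y ≤ ∑' i, pois x i * Q (n+2*i) y := by
        apply hsA'.tsum_le_tsum (fun i => ?_) hsB
        exact mul_le_mul_of_nonneg_left (hstep i) (pois_nonneg hx0 i)
      rw [hA]
      nlinarith [hle]
  have e1 := cdf_eq_tsum hn l1 hy
  have e2 := cdf_eq_tsum hn l2 hy
  rw [e1, e2]
  exact hanti ⟨le_refl l2, h12⟩ ⟨h12, le_refl l1⟩ h12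

/-! ### ENNReal-valued density and the mean computation -/

noncomputable def NE (n : ℕ) (lam : ℝ) (t : ℝ) : ℝ≥0∞ :=
  ∑' i, ENNReal.ofReal (pois lam i * chiSqPdf (n + 2*i) t)

lemma measurable_NE (n : ℕ) (lam : ℝ) : Measurable (NE n lam) := by
  apply Measurable.ennreal_tsum
  intro i
  exact ((measurable_chiSqPdf _).const_mul _).ennreal_ofReal

lemma tsum_toReal_ofReal (f : ℕ → ℝ) (hf : ∀ i, 0 ≤ f i) :
    ∑' i, f i = (∑' i, ENNReal.ofReal (f i)).toReal := by
  by_cases h : Summable f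
  · rw [← ENNReal.ofReal_tsum_of_nonneg hf h, ENNReal.toReal_ofReal (tsum_nonneg hf)]
  · rw [tsum_eq_zero_of_not_summable h]
    have htop : ∑' i, ENNReal.ofReal (f i) = ⊤ := by
      by_contra hne
      apply h
      exact (ENNReal.summable_toReal hne).congr fun i => ENNReal.toReal_ofReal (hf i)
    rw [htop]
    simp

lemma ncpdf_eq_toReal_NE {n : ℕ} {lam : ℝ} (hl : 0 ≤ lam) {t : ℝ} (ht : 0 < t) :
    ncChiSqPdf n lam t = (NE n lam t).toReal := by
  exact tsum_toReal_ofReal (fun i => pois lam i * chiSqPdf (n+2*i) t)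
    (fun i => mul_nonneg (pois_nonneg hl i) (chiSqPdf_nonneg _ ht.le))

lemma lintegral_NE {n : ℕ} (hn : 1 ≤ n) {lam : ℝ} (hl : 0 ≤ lam) :
    ∫⁻ t in Ioi (0:ℝ), NE n lam t = 1 := by
  unfold NE
  rw [lintegral_tsum (fun i =>
    (((measurable_chiSqPdf _).const_mul _).ennreal_ofReal).aemeasurable)]
  have hterm : ∀ i : ℕ, ∫⁻ t in Ioi (0:ℝ), ENNReal.ofReal (pois lam i * chiSqPdf (n+2*i) t)
      = ENNReal.ofReal (pois lam i) := by
    intro i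
    rw [← MeasureTheory.ofReal_integral_eq_lintegral_ofReal
      ((integrableOn_chiSqPdf (le_add_right hn)).const_mul _)
      ((ae_restrict_iff' measurableSet_Ioi).2 (ae_of_all _ fun t ht =>
        mul_nonneg (pois_nonneg hl i) (chiSqPdf_nonneg _ (le_of_lt ht))))]
    rw [integral_const_mul, integral_chiSqPdf (le_add_right hn), mul_one]
  rw [tsum_congr hterm, ← ENNReal.ofReal_tsum_of_nonneg (pois_nonneg hl) (summable_pois lam),
    tsum_pois]
  exact ENNReal.ofReal_one

lemma summable_pois_aff {lam : ℝ} (hl : 0 ≤ lam) (n : ℕ) :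
    Summable (fun i => pois lam i * ((n + 2*i : ℕ):ℝ)) := by
  have h : (fun i => pois lam i * ((n + 2*i : ℕ):ℝ))
      = fun i => (n:ℝ) * pois lam i + 2 * (pois lam i * i) := by
    funext i; push_cast; ring
  rw [h]
  exact ((summable_pois lam).mul_left _).add ((summable_pois_mul hl).mul_left _)

lemma tsum_pois_aff {lam : ℝ} (hl : 0 ≤ lam) (n : ℕ) :
    ∑' i, pois lam i * ((n + 2*i : ℕ):ℝ) = n + lam := by
  have h : ∀ i, pois lam i * ((n + 2*i : ℕ):ℝ)
      = (n:ℝ) * pois lam i + 2 * (pois lam i * i) := by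
    intro i; push_cast; ring
  rw [tsum_congr h, Summable.tsum_add ((summable_pois lam).mul_left _)
    ((summable_pois_mul hl).mul_left _), tsum_mul_left, tsum_mul_left, tsum_pois,
    tsum_pois_mul hl]
  ring

lemma lintegral_NE_mul {n : ℕ} (hn : 1 ≤ n) {lam : ℝ} (hl : 0 ≤ lam) :
    ∫⁻ t in Ioi (0:ℝ), ENNReal.ofReal t * NE n lam t = ENNReal.ofReal (n + lam) := by
  have hrw : ∀ t ∈ Ioi (0:ℝ), ENNReal.ofReal t * NE n lam t
      = ∑' i, ENNReal.ofReal (pois lam i * (t * chiSqPdf (n+2*i) t)) := by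
    intro t ht
    unfold NE
    rw [← ENNReal.tsum_mul_left]
    congr 1; funext i
    rw [← ENNReal.ofReal_mul (le_of_lt ht)]
    congr 1; ring
  rw [setLIntegral_congr_fun measurableSet_Ioi hrw]
  rw [lintegral_tsum (fun i =>
    (((measurable_id'.fun_mul (measurable_chiSqPdf _)).const_mul _).ennreal_ofReal).aemeasurable)]
  have hterm : ∀ i : ℕ, ∫⁻ t in Ioi (0:ℝ),
      ENNReal.ofReal (pois lam i * (t * chiSqPdf (n+2*i) t))
      = ENNReal.ofReal (pois lam i * ((n + 2*i : ℕ):ℝ)) := by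
    intro i
    rw [← MeasureTheory.ofReal_integral_eq_lintegral_ofReal
      ((integrableOn_id_mul_chiSqPdf (le_add_right hn)).const_mul _)
      ((ae_restrict_iff' measurableSet_Ioi).2 (ae_of_all _ fun t ht =>
        mul_nonneg (pois_nonneg hl i)
          (mul_nonneg (le_of_lt ht) (chiSqPdf_nonneg _ (le_of_lt ht)))))]
    rw [integral_const_mul, integral_id_mul_chiSqPdf (le_add_right hn)]
  rw [tsum_congr hterm, ← ENNReal.ofReal_tsum_of_nonneg
    (fun i => mul_nonneg (pois_nonneg hl i) (Nat.cast_nonneg _)) (summable_pois_aff hl n),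
    tsum_pois_aff hl n]

lemma lintegral_NE_le {n : ℕ} (hn : 1 ≤ n) {lam : ℝ} (hl : 0 ≤ lam) {s : Set ℝ}
    (hsub : s ⊆ Ioi 0) : ∫⁻ t in s, NE n lam t ≠ ⊤ := by
  have hle : ∫⁻ t in s, NE n lam t ≤ ∫⁻ t in Ioi 0, NE n lam t :=
    lintegral_mono' (Measure.restrict_mono hsub le_rfl) le_rfl
  rw [lintegral_NE hn hl] at hle
  exact ne_top_of_le_ne_top ENNReal.one_ne_top hle

lemma setIntegral_ncpdf {n : ℕ} (hn : 1 ≤ n) {lam : ℝ} (hl : 0 ≤ lam) {s : Set ℝ}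
    (hs : MeasurableSet s) (hsub : s ⊆ Ioi 0) :
    ∫ t in s, ncChiSqPdf n lam t = (∫⁻ t in s, NE n lam t).toReal := by
  have hnn : 0 ≤ᵐ[volume.restrict s] ncChiSqPdf n lam :=
    (ae_restrict_iff' hs).2 (ae_of_all _ fun t ht => by
      rw [ncpdf_eq_toReal_NE hl (hsub ht)]; exact ENNReal.toReal_nonneg)
  have hmeas : AEStronglyMeasurable (ncChiSqPdf n lam) (volume.restrict s) := by
    apply ((measurable_NE n lam).ennreal_toReal.aestronglyMeasurable).congr
    exact (ae_restrict_iff' hs).2 (ae_of_all _ fun t ht =>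
      (ncpdf_eq_toReal_NE hl (hsub ht)).symm)
  rw [integral_eq_lintegral_of_nonneg_ae hnn hmeas]
  congr 1
  apply lintegral_congr_ae
  have hfin : ∀ᵐ t ∂(volume.restrict s), NE n lam t < ⊤ :=
    ae_lt_top (measurable_NE n lam) (lintegral_NE_le hn hl hsub)
  filter_upwards [hfin, ae_restrict_mem hs] with t hfin' hts
  rw [ncpdf_eq_toReal_NE hl (hsub hts), ENNReal.ofReal_toReal hfin'.ne]

lemma cdf_eq_one_sub {n : ℕ} (hn : 1 ≤ n) {lam : ℝ} (hl : 0 ≤ lam) {y : ℝ} (hy : 0 < y) :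
    ncChiSqCdf n lam y = 1 - (∫⁻ t in Ioi y, NE n lam t).toReal := by
  have hyIoi : Ioi y ⊆ Ioi (0:ℝ) := Ioi_subset_Ioi hy.le
  have hIoc : Ioc (0:ℝ) y ⊆ Ioi 0 := Ioc_subset_Ioi_self
  have hsplit : (∫⁻ t in Ioc (0:ℝ) y, NE n lam t) + ∫⁻ t in Ioi y, NE n lam t = 1 := by
    rw [← lintegral_union measurableSet_Ioi (Set.Ioc_disjoint_Ioi le_rfl),
      Ioc_union_Ioi_eq_Ioi hy.le, lintegral_NE hn hl]
  have hA := lintegral_NE_le hn hl hIoc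
  have hB := lintegral_NE_le hn hl hyIoi
  have hcdf : ncChiSqCdf n lam y = (∫⁻ t in Ioc (0:ℝ) y, NE n lam t).toReal :=
    setIntegral_ncpdf hn hl measurableSet_Ioc hIoc
  have htoReal : (∫⁻ t in Ioc (0:ℝ) y, NE n lam t).toReal
      + (∫⁻ t in Ioi y, NE n lam t).toReal = 1 := by
    rw [← ENNReal.toReal_add hA hB, hsplit]
    simp
  rw [hcdf]
  linarith

noncomputable def RR (n : ℕ) (lam : ℝ) (y : ℝ) : ℝ := (∫⁻ t in Ioi y, NE n lam t).toReal

lemma antitone_lintegral_NE (n : ℕ) (lam : ℝ) :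
    Antitone (fun y => ∫⁻ t in Ioi y, NE n lam t) := by
  intro y1 y2 h
  exact lintegral_mono' (Measure.restrict_mono (Ioi_subset_Ioi h) le_rfl) le_rfl

lemma measurable_RR (n : ℕ) (lam : ℝ) : Measurable (RR n lam) :=
  ENNReal.measurable_toReal.comp (antitone_lintegral_NE n lam).measurable

lemma lintegral_lintegral_Ioi (g : ℝ → ℝ≥0∞) (hg : Measurable g) :
    ∫⁻ y in Ioi (0:ℝ), ∫⁻ t in Ioi y, g t = ∫⁻ t in Ioi (0:ℝ), ENNReal.ofReal t * g t := by
  have h1 : ∀ y ∈ Ioi (0:ℝ), ∫⁻ t in Ioi y, g t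
      = ∫⁻ t in Ioi (0:ℝ), (Ioi y).indicator g t := by
    intro y hy
    rw [lintegral_indicator measurableSet_Ioi, Measure.restrict_restrict measurableSet_Ioi]
    congr 1
    rw [inter_eq_left.2 (Ioi_subset_Ioi (le_of_lt hy))]
  rw [setLIntegral_congr_fun measurableSet_Ioi h1]
  have hmeas : AEMeasurable (Function.uncurry (fun y t => (Ioi y).indicator g t))
      ((volume.restrict (Ioi (0:ℝ))).prod (volume.restrict (Ioi (0:ℝ)))) := by
    have heq : Function.uncurry (fun y t => (Ioi y).indicator g t)
        = {p : ℝ × ℝ | p.1 < p.2}.indicator (fun p => g p.2) := by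
      funext p
      by_cases h : p.1 < p.2
      · rw [Function.uncurry]
        simp [indicator_of_mem (mem_Ioi.2 h), indicator_of_mem (show p ∈ {p : ℝ×ℝ | p.1 < p.2} from h)]
      · rw [Function.uncurry]
        simp [indicator_of_notMem (fun hc => h (mem_Ioi.1 hc)),
          indicator_of_notMem (show p ∉ {p : ℝ×ℝ | p.1 < p.2} from h)]
    rw [heq]
    exact ((hg.comp measurable_snd).indicator
      (measurableSet_lt measurable_fst measurable_snd)).aemeasurable
  rw [lintegral_lintegral_swap hmeas]
  apply setLIntegral_congr_fun measurableSet_Ioi ?_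
  intro t ht
  dsimp only
  have h2 : ∀ y : ℝ, (Ioi y).indicator g t = g t * (Iio t).indicator (fun _ => 1) y := by
    intro y
    by_cases h : y < t
    · rw [indicator_of_mem (mem_Ioi.2 h), indicator_of_mem (mem_Iio.2 h), mul_one]
    · rw [indicator_of_notMem (fun hc => h (mem_Ioi.1 hc)),
        indicator_of_notMem (fun hc => h (mem_Iio.1 hc)), mul_zero]
  rw [lintegral_congr h2, lintegral_const_mul _ ((measurable_const (a := (1:ℝ≥0∞))).indicator measurableSet_Iio)]
  rw [lintegral_indicator measurableSet_Iio, Measure.restrict_restrict measurableSet_Iio,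
    setLIntegral_one, Set.Iio_inter_Ioi, Real.volume_Ioo, sub_zero, mul_comm]

lemma lintegral_ofReal_RR {n : ℕ} (hn : 1 ≤ n) {lam : ℝ} (hl : 0 ≤ lam) :
    ∫⁻ y in Ioi (0:ℝ), ENNReal.ofReal (RR n lam y) = ENNReal.ofReal (n + lam) := by
  have h1 : ∀ y ∈ Ioi (0:ℝ), ENNReal.ofReal (RR n lam y) = ∫⁻ t in Ioi y, NE n lam t := by
    intro y hy
    unfold RR
    rw [ENNReal.ofReal_toReal (lintegral_NE_le hn hl (Ioi_subset_Ioi hy.le))]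
  rw [setLIntegral_congr_fun measurableSet_Ioi h1,
    lintegral_lintegral_Ioi _ (measurable_NE n lam), lintegral_NE_mul hn hl]

lemma integrableOn_RR {n : ℕ} (hn : 1 ≤ n) {lam : ℝ} (hl : 0 ≤ lam) :
    IntegrableOn (RR n lam) (Ioi 0) := by
  refine ⟨(measurable_RR n lam).aestronglyMeasurable, ?_⟩
  rw [HasFiniteIntegral]
  have h : ∀ y : ℝ, ‖RR n lam y‖ₑ = ENNReal.ofReal (RR n lam y) := fun y =>
    Real.enorm_eq_ofReal ENNReal.toReal_nonneg
  rw [lintegral_congr h, lintegral_ofReal_RR hn hl]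
  exact ENNReal.ofReal_lt_top

lemma integral_RR {n : ℕ} (hn : 1 ≤ n) {lam : ℝ} (hl : 0 ≤ lam) :
    ∫ y in Ioi (0:ℝ), RR n lam y = n + lam := by
  have hnn : 0 ≤ᵐ[volume.restrict (Ioi (0:ℝ))] RR n lam :=
    ae_of_all _ fun y => ENNReal.toReal_nonneg
  rw [integral_eq_lintegral_of_nonneg_ae hnn (measurable_RR n lam).aestronglyMeasurable,
    lintegral_ofReal_RR hn hl, ENNReal.toReal_ofReal (by positivity)]

end NCProof

open NCProof in
theorem cdf_difference_is_pdf (n : ℕ) (hn : 1 ≤ n) (σ ρ₁ ρ₂ : ℝ)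
    (hσ : 0 < σ) (hρ₂ : 0 ≤ ρ₂) (hρ : ρ₂ < ρ₁) :
    (∀ y : ℝ, 0 < y →
      0 ≤ (σ ^ 2 / (ρ₁ ^ 2 - ρ₂ ^ 2)) *
        (ncChiSqCdf n (ρ₂ ^ 2 / σ ^ 2) y - ncChiSqCdf n (ρ₁ ^ 2 / σ ^ 2) y)) ∧
    (∫ y in Set.Ioi (0 : ℝ),
        (σ ^ 2 / (ρ₁ ^ 2 - ρ₂ ^ 2)) *
          (ncChiSqCdf n (ρ₂ ^ 2 / σ ^ 2) y - ncChiSqCdf n (ρ₁ ^ 2 / σ ^ 2) y)) = 1 := by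
  have hσ2 : (0:ℝ) < σ ^ 2 := by positivity
  set l2 := ρ₂ ^ 2 / σ ^ 2 with hl2def
  set l1 := ρ₁ ^ 2 / σ ^ 2 with hl1def
  have hl2 : 0 ≤ l2 := by positivity
  have hsq : ρ₂ ^ 2 < ρ₁ ^ 2 := by
    exact pow_lt_pow_left₀ hρ hρ₂ (by norm_num)
  have hl12 : l2 ≤ l1 := by
    have := mul_le_mul_of_nonneg_right hsq.le (inv_nonneg.2 hσ2.le)
    simpa [hl1def, hl2def, div_eq_mul_inv] using this
  have hl1 : 0 ≤ l1 := hl2.trans hl12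
  have hd : (0:ℝ) < ρ₁ ^ 2 - ρ₂ ^ 2 := sub_pos.2 hsq
  constructor
  · intro y hy
    have h := cdf_anti hn hl2 hl12 hy
    have : 0 ≤ σ ^ 2 / (ρ₁ ^ 2 - ρ₂ ^ 2) := by positivity
    exact mul_nonneg this (sub_nonneg.2 h)
  · have hcong : ∀ y ∈ Ioi (0:ℝ),
        (σ ^ 2 / (ρ₁ ^ 2 - ρ₂ ^ 2)) * (ncChiSqCdf n l2 y - ncChiSqCdf n l1 y)
          = (σ ^ 2 / (ρ₁ ^ 2 - ρ₂ ^ 2)) * (RR n l1 y - RR n l2 y) := by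
      intro y hy
      rw [cdf_eq_one_sub hn hl2 hy, cdf_eq_one_sub hn hl1 hy]
      simp only [RR]
      ring
    rw [setIntegral_congr_fun measurableSet_Ioi hcong]
    rw [integral_const_mul]
    rw [integral_sub (integrableOn_RR hn hl1) (integrableOn_RR hn hl2),
      integral_RR hn hl1, integral_RR hn hl2]
    have : (↑n + l1) - (↑n + l2) = (ρ₁ ^ 2 - ρ₂ ^ 2) / σ ^ 2 := by
      rw [hl1def, hl2def]; ring
    rw [this]
    field_simp
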